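/- Let k, n, d, d⊥ be positive integers with k < n such that ∑_{i=0}^{d-1} C(n,i) < (1/4)·2^{n-k} and ∑_{i=0}^{d⊥-1} C(n,i) < (1/2)·2^{k}. Then there exists a binary [n,k] linear code C with minimum distance ≥ d containing no word of weight greater than n-d+1, such that C⊥ has minimum distance ≥ d⊥. -/

import Mathlib

open Finset

set_option linter.unusedSectionVars false

namespace GVAux

lemma zmod2_ne_zero {a : ZMod 2} (h : a ≠ 0) : a = 1 := by revert a; decide

lemma hn_def {n : ℕ} (e : Fin n → ZMod 2) :
    hammingNorm e = (univ.filter fun j => e j ≠ 0).card := rfl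

lemma hn_le {n : ℕ} (e : Fin n → ZMod 2) : hammingNorm e ≤ n := by
  rw [hn_def]
  simpa using (Finset.card_filter_le univ fun j => e j ≠ 0)

lemma card_wt_eq_le (n i : ℕ) :
    (univ.filter fun e : Fin n → ZMod 2 => hammingNorm e = i).card ≤ n.choose i := by
  classical
  have h := Finset.card_le_card_of_injOn
    (f := fun e : Fin n → ZMod 2 => univ.filter fun j => e j ≠ 0)
    (s := univ.filter fun e : Fin n → ZMod 2 => hammingNorm e = i)
    (t := Finset.powersetCard i univ) ?_ ?_
  · simpa [Finset.card_powersetCard] using h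
  · intro e he
    simp only [mem_coe, mem_filter, mem_univ, true_and] at he
    rw [Finset.mem_coe, Finset.mem_powersetCard]
    exact ⟨Finset.subset_univ _, by rw [← hn_def, he]⟩
  · intro e he e' he' hst
    have h' : (univ.filter fun j => e j ≠ 0) = univ.filter fun j => e' j ≠ 0 := hst
    funext j
    have hj : (e j ≠ 0) ↔ (e' j ≠ 0) := by
      constructor <;> intro hne
      · have : j ∈ univ.filter fun j => e' j ≠ 0 := by
          rw [← h']; exact mem_filter.mpr ⟨mem_univ j, hne⟩
        exact (mem_filter.mp this).2
      · have : j ∈ univ.filter fun j => e j ≠ 0 := by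
          rw [h']; exact mem_filter.mpr ⟨mem_univ j, hne⟩
        exact (mem_filter.mp this).2
    by_cases h0 : e j = 0
    · rw [h0]
      by_contra hne
      exact (hj.mpr (Ne.symm hne)) h0
    · rw [zmod2_ne_zero h0, zmod2_ne_zero (hj.mp h0)]

lemma card_wt_lt_le (n t : ℕ) :
    (univ.filter fun e : Fin n → ZMod 2 => hammingNorm e < t).card
      ≤ ∑ i ∈ range t, n.choose i := by
  classical
  rw [Finset.card_eq_sum_card_fiberwise (f := fun e => hammingNorm e) (t := range t)
      (fun e he => by simpa using (mem_filter.mp he).2)]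
  refine Finset.sum_le_sum fun i _ => ?_
  refine le_trans (Finset.card_le_card ?_) (card_wt_eq_le n i)
  intro e he
  simp only [mem_filter, mem_univ, true_and] at he ⊢
  exact he.2

lemma card_wt_high_le (n d : ℕ) :
    (univ.filter fun e : Fin n → ZMod 2 => n - d + 1 < hammingNorm e).card
      ≤ ∑ i ∈ range d, n.choose i := by
  classical
  refine le_trans (Finset.card_le_card_of_injOn (fun e => e + 1) ?_ ?_) (card_wt_lt_le n d)
  · intro e he
    simp only [mem_coe, mem_filter, mem_univ, true_and] at he ⊢
    have hcompl : hammingNorm (e + 1) = n - hammingNorm e := by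
      have h1 : (univ.filter fun j => (e + 1) j ≠ 0) = (univ.filter fun j => ¬ (e j ≠ 0)) := by
        apply Finset.filter_congr
        intro j _
        have : ∀ a : ZMod 2, (a + 1 ≠ 0) ↔ ¬ (a ≠ 0) := by decide
        simpa using this (e j)
      have h2 := Finset.card_filter_add_card_filter_not
        (s := (univ : Finset (Fin n))) (p := fun j => e j ≠ 0)
      rw [hn_def, h1, hn_def e]
      have : (univ : Finset (Fin n)).card = n := by simp
      omega
    have := hn_le e
    omega
  · intro e _ e' _ h
    have := congrArg (fun z => z + 1) h
    simpa using this

variable {M N : Type*} [AddCommGroup M] [AddCommGroup N]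
  [Module (ZMod 2) M] [Module (ZMod 2) N] [Fintype M] [Fintype N]
  [DecidableEq M] [DecidableEq N]

lemma fiber_card (f : M →ₗ[ZMod 2] N) (hf : Function.Surjective f) (v : N) :
    (univ.filter fun G => f G = v).card = (univ.filter fun G => f G = 0).card := by
  obtain ⟨G₀, hG₀⟩ := hf v
  refine Finset.card_nbij' (fun G => G - G₀) (fun G => G + G₀) ?_ ?_ ?_ ?_
  · intro a ha
    simp only [mem_coe, mem_filter, mem_univ, true_and] at ha ⊢
    simp [map_sub, ha, hG₀]
  · intro a ha
    simp only [mem_coe, mem_filter, mem_univ, true_and] at ha ⊢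
    simp [map_add, ha, hG₀]
  · intro a _; simp
  · intro a _; simp

lemma count_mem (f : M →ₗ[ZMod 2] N) (hf : Function.Surjective f) (S : Finset N) :
    (univ.filter fun G => f G ∈ S).card
      = S.card * (univ.filter fun G => f G = 0).card := by
  rw [Finset.card_eq_sum_card_fiberwise (f := fun G => f G) (t := S)
      (s := univ.filter fun G => f G ∈ S)
      (fun G hG => mem_coe.mpr (mem_filter.mp (mem_coe.mp hG)).2)]
  rw [Finset.sum_congr rfl (fun v hv => ?_), Finset.sum_const, smul_eq_mul]
  rw [Finset.filter_filter]
  rw [show (univ.filter fun G => f G ∈ S ∧ f G = v) = univ.filter fun G => f G = v from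
    Finset.filter_congr fun G _ => ⟨And.right, fun h => ⟨h ▸ hv, h⟩⟩]
  exact fiber_card f hf v

lemma ker_count (f : M →ₗ[ZMod 2] N) (hf : Function.Surjective f) :
    (univ.filter fun G => f G = 0).card * Fintype.card N = Fintype.card M := by
  have h := count_mem f hf (univ : Finset N)
  simp only [Finset.mem_univ, Finset.filter_true, Finset.card_univ] at h
  rw [mul_comm]
  exact h.symm

lemma arith (A B Ec Xc S1 S2 Q1 Q2 P3 R1 P6 P5 : ℕ)
    (hA : A ≤ Q1 * (Ec * P3)) (hEc : Ec ≤ 2 * S1) (h1 : 4 * S1 ≤ Q2)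
    (hB : B ≤ Xc * P6) (hXc : Xc + 1 ≤ S2) (h2 : 2 * S2 + 1 ≤ 2 * R1)
    (hpos3 : 1 ≤ P3) (hpos6 : 1 ≤ P6) (hQ2 : 1 ≤ Q2)
    (hprod1 : (Q1 + 1) * ((Q2 + 1) * P3) = 2 * P5)
    (hprod2 : (2 * R1) * P6 = 2 * P5) :
    A + B < 2 * P5 := by
  have hS2R : S2 + 1 ≤ R1 := by omega
  have hXcR : Xc + 2 ≤ R1 := by omega
  have hBB : 2 * B + 4 * P6 ≤ 2 * P5 := by
    calc 2 * B + 4 * P6 ≤ 2 * (Xc * P6) + 4 * P6 := by omega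
      _ ≤ (2 * R1) * P6 := by nlinarith
      _ = 2 * P5 := hprod2
  have h2Ec : 2 * Ec ≤ Q2 := by omega
  have key : Q1 * ((2 * Ec) * P3) ≤ Q1 * (Q2 * P3) :=
    Nat.mul_le_mul (le_refl _) (Nat.mul_le_mul h2Ec (le_refl _))
  have hAA : 2 * A + P3 + Q2 * P3 ≤ 2 * P5 := by
    calc 2 * A + P3 + Q2 * P3 ≤ 2 * (Q1 * (Ec * P3)) + P3 + Q2 * P3 := by omega
      _ ≤ Q1 * (Q2 * P3) + P3 + Q2 * P3 := by nlinarith [key]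
      _ ≤ (Q1 + 1) * ((Q2 + 1) * P3) := by ring_nf; nlinarith
      _ = 2 * P5 := hprod1
  nlinarith

end GVAux

namespace GVAux

/-- the encoding map `m ↦ m ⬝ G` as a linear map in `G` (for fixed `m`). -/
def phiL (n k : ℕ) (m : Fin k → ZMod 2) :
    (Fin k → Fin n → ZMod 2) →ₗ[ZMod 2] (Fin n → ZMod 2) where
  toFun G := fun j => ∑ i, m i * G i j
  map_add' G H := by funext j; simp [Pi.add_apply, mul_add, Finset.sum_add_distrib]
  map_smul' c G := by
    funext j; simp [Pi.smul_apply, smul_eq_mul, Finset.mul_sum, mul_left_comm]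

/-- the syndrome map `G ↦ G ⬝ x` as a linear map in `G` (for fixed `x`). -/
def psiL (n k : ℕ) (x : Fin n → ZMod 2) :
    (Fin k → Fin n → ZMod 2) →ₗ[ZMod 2] (Fin k → ZMod 2) where
  toFun G := fun i => ∑ j, x j * G i j
  map_add' G H := by funext i; simp [Pi.add_apply, mul_add, Finset.sum_add_distrib]
  map_smul' c G := by
    funext i; simp [Pi.smul_apply, smul_eq_mul, Finset.mul_sum, mul_left_comm]

/-- the encoding map `m ↦ m ⬝ G` as a linear map in `m` (for fixed `G`). -/
def PhiL (n k : ℕ) (G : Fin k → Fin n → ZMod 2) :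
    (Fin k → ZMod 2) →ₗ[ZMod 2] (Fin n → ZMod 2) where
  toFun m := fun j => ∑ i, m i * G i j
  map_add' m m' := by funext j; simp [Pi.add_apply, add_mul, Finset.sum_add_distrib]
  map_smul' c m := by
    funext j; simp [Pi.smul_apply, smul_eq_mul, Finset.mul_sum, mul_assoc]

lemma phiL_surj (n k : ℕ) {m : Fin k → ZMod 2} (hm : m ≠ 0) :
    Function.Surjective (phiL n k m) := by
  obtain ⟨i₀, hi₀⟩ := Function.ne_iff.mp hm
  have h1 : m i₀ = 1 := zmod2_ne_zero (by simpa using hi₀)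
  intro v
  refine ⟨fun i => if i = i₀ then v else 0, ?_⟩
  funext j
  show (∑ i, m i * (if i = i₀ then v else 0) j) = v j
  have : ∀ i, m i * (if i = i₀ then v else 0) j = if i = i₀ then m i * v j else 0 := by
    intro i; by_cases h : i = i₀ <;> simp [h]
  rw [Finset.sum_congr rfl fun i _ => this i, Finset.sum_ite_eq' univ i₀]
  simp [h1]

lemma psiL_surj (n k : ℕ) {x : Fin n → ZMod 2} (hx : x ≠ 0) :
    Function.Surjective (psiL n k x) := by
  obtain ⟨j₀, hj₀⟩ := Function.ne_iff.mp hx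
  have h1 : x j₀ = 1 := zmod2_ne_zero (by simpa using hj₀)
  intro w
  refine ⟨fun i j => if j = j₀ then w i else 0, ?_⟩
  funext i
  show (∑ j, x j * if j = j₀ then w i else 0) = w i
  have : ∀ j, (x j * if j = j₀ then w i else 0) = if j = j₀ then x j * w i else 0 := by
    intro j; by_cases h : j = j₀ <;> simp [h]
  rw [Finset.sum_congr rfl fun j _ => this j, Finset.sum_ite_eq' univ j₀]
  simp [h1]

end GVAux

open GVAux in
/-- Binary GV-type bound with an additional upper bound on codeword weights: there is a
binary `[n,k]` code with minimum distance at least `d`, no codeword of weight greater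
than `n - d + 1`, and dual minimum distance at least `d⊥`. -/
theorem gv_binary_code_with_weight_cap (n k d dperp : ℕ)
    (hk : 1 ≤ k) (hkn : k < n) (hd : 1 ≤ d) (hdp : 1 ≤ dperp)
    (h1 : 4 * ∑ i ∈ Finset.range d, n.choose i < 2 ^ (n - k))
    (h2 : 2 * ∑ i ∈ Finset.range dperp, n.choose i < 2 ^ k) :
    ∃ C : Submodule (ZMod 2) (Fin n → ZMod 2), Module.finrank (ZMod 2) C = k ∧
      (∀ c ∈ C, c ≠ 0 → d ≤ hammingNorm c) ∧
      (∀ c ∈ C, hammingNorm c ≤ n - d + 1) ∧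
      (∀ x : Fin n → ZMod 2, (∀ c ∈ C, ∑ i, x i * c i = 0) → x ≠ 0 →
        dperp ≤ hammingNorm x) := by
  classical
  set S1 := ∑ i ∈ Finset.range d, n.choose i with hS1def
  set S2 := ∑ i ∈ Finset.range dperp, n.choose i with hS2def
  -- basic exponent facts
  have h2n : (1:ℕ) ≤ 2 ^ n := Nat.one_le_two_pow
  have h2nk : (1:ℕ) ≤ 2 ^ (n - k) := Nat.one_le_two_pow
  have h2k : (1:ℕ) ≤ 2 ^ k := Nat.one_le_two_pow
  have hnnk : n ≤ n * k := Nat.le_mul_of_pos_right n hk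
  have hS1pos : 1 ≤ S1 := by
    rw [hS1def]
    calc 1 = n.choose 0 := by simp
      _ ≤ ∑ i ∈ Finset.range d, n.choose i :=
        Finset.single_le_sum (fun i _ => Nat.zero_le _) (by simp; omega)
  have hS2pos : 1 ≤ S2 := by
    rw [hS2def]
    calc 1 = n.choose 0 := by simp
      _ ≤ ∑ i ∈ Finset.range dperp, n.choose i :=
        Finset.single_le_sum (fun i _ => Nat.zero_le _) (by simp; omega)
  have hknk : k ≤ n * k := Nat.le_mul_of_pos_left k (by omega)
  -- bad sets
  set E' : Finset (Fin n → ZMod 2) :=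
    univ.filter (fun e => hammingNorm e < d ∨ n - d + 1 < hammingNorm e) with hE'def
  set X : Finset (Fin n → ZMod 2) :=
    univ.filter (fun x => x ≠ 0 ∧ hammingNorm x < dperp) with hXdef
  have hE' : E'.card ≤ 2 * S1 := by
    rw [hE'def, Finset.filter_or]
    refine le_trans (Finset.card_union_le _ _) ?_
    have := card_wt_lt_le n d
    have := card_wt_high_le n d
    omega
  have hX : X.card + 1 ≤ S2 := by
    have h0 : (0 : Fin n → ZMod 2) ∉ X := by simp [hXdef]
    have hsub : insert (0 : Fin n → ZMod 2) X ⊆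
        univ.filter (fun x => hammingNorm x < dperp) := by
      intro y hy
      rcases Finset.mem_insert.mp hy with h | h
      · subst h; simp; omega
      · rw [hXdef] at h
        simp only [mem_filter, mem_univ, true_and] at h ⊢
        exact h.2
    calc X.card + 1 = (insert (0 : Fin n → ZMod 2) X).card :=
          (Finset.card_insert_of_notMem h0).symm
      _ ≤ (univ.filter (fun x : Fin n → ZMod 2 => hammingNorm x < dperp)).card :=
          Finset.card_le_card hsub
      _ ≤ S2 := card_wt_lt_le n dperp
  -- cardinalities of the ambient spaces
  have hcardV : Fintype.card (Fin n → ZMod 2) = 2 ^ n := by simp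
  have hcardW : Fintype.card (Fin k → ZMod 2) = 2 ^ k := by simp
  have hcardMT : Fintype.card (Fin k → Fin n → ZMod 2) = 2 ^ (n * k) := by
    simp [pow_mul]
  -- fiber counts
  have hKm : ∀ m : Fin k → ZMod 2, m ≠ 0 →
      (univ.filter fun G : Fin k → Fin n → ZMod 2 => phiL n k m G ∈ E').card
        = E'.card * 2 ^ (n * k - n) := by
    intro m hm
    have hsurj := phiL_surj n k hm
    have hker := ker_count (phiL n k m) hsurj
    rw [hcardV, hcardMT] at hker
    have hsplit : (2:ℕ) ^ (n * k) = 2 ^ (n * k - n) * 2 ^ n := by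
      rw [← pow_add]; congr 1; omega
    have hKval : (univ.filter fun G : Fin k → Fin n → ZMod 2 => phiL n k m G = 0).card
        = 2 ^ (n * k - n) := by
      have := hker.trans hsplit
      exact Nat.eq_of_mul_eq_mul_right (by positivity) this
    rw [count_mem (phiL n k m) hsurj E', hKval]
  have hKx : ∀ x : Fin n → ZMod 2, x ≠ 0 →
      (univ.filter fun G : Fin k → Fin n → ZMod 2 => psiL n k x G = 0).card
        = 2 ^ (n * k - k) := by
    intro x hx
    have hsurj := psiL_surj n k hx
    have hker := ker_count (psiL n k x) hsurj
    rw [hcardW, hcardMT] at hker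
    have hsplit : (2:ℕ) ^ (n * k) = 2 ^ (n * k - k) * 2 ^ k := by
      rw [← pow_add]; congr 1; omega
    exact Nat.eq_of_mul_eq_mul_right (by positivity) (hker.trans hsplit)
  -- the two bad events
  set B1 : Finset (Fin k → Fin n → ZMod 2) :=
    (univ.filter fun m : Fin k → ZMod 2 => m ≠ 0).biUnion
      (fun m => univ.filter fun G => phiL n k m G ∈ E') with hB1def
  set B2 : Finset (Fin k → Fin n → ZMod 2) :=
    X.biUnion (fun x => univ.filter fun G => psiL n k x G = 0) with hB2def
  have hB1card : B1.card ≤ (2 ^ k - 1) * (E'.card * 2 ^ (n * k - n)) := by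
    rw [hB1def]
    refine le_trans (Finset.card_biUnion_le) ?_
    rw [Finset.sum_congr rfl (fun m hm => hKm m (by simpa using (mem_filter.mp hm).2))]
    rw [Finset.sum_const, smul_eq_mul]
    have : (univ.filter fun m : Fin k → ZMod 2 => m ≠ 0).card = 2 ^ k - 1 := by
      rw [Finset.filter_ne' univ 0, Finset.card_erase_of_mem (mem_univ 0), card_univ, hcardW]
    rw [this]
  have hB2card : B2.card ≤ X.card * 2 ^ (n * k - k) := by
    rw [hB2def]
    refine le_trans (Finset.card_biUnion_le) ?_
    rw [Finset.sum_congr rfl (fun x hx => hKx x (by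
      rw [hXdef] at hx; exact ((mem_filter.mp hx).2).1))]
    rw [Finset.sum_const, smul_eq_mul]
  -- the union of bad events doesn't cover everything
  have hmain : B1.card + B2.card < 2 ^ (n * k) := by
    have hpow1 : (2:ℕ) ^ k - 1 + 1 = 2 ^ k := by omega
    have hpow2 : (2:ℕ) ^ (n - k) - 1 + 1 = 2 ^ (n - k) := by omega
    have hR1 : (2:ℕ) * 2 ^ (k - 1) = 2 ^ k := by
      rw [← pow_succ']; congr 1; omega
    have hnk1 : (2:ℕ) ^ (n * k) = 2 * 2 ^ (n * k - 1) := by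
      rw [← pow_succ']; congr 1; omega
    have hprod1 : ((2 ^ k - 1) + 1) * (((2 ^ (n - k) - 1) + 1) * 2 ^ (n * k - n))
        = 2 * 2 ^ (n * k - 1) := by
      rw [hpow1, hpow2, ← hnk1, ← pow_add, ← pow_add]; congr 1; omega
    have hprod2 : (2 * 2 ^ (k - 1)) * 2 ^ (n * k - k) = 2 * 2 ^ (n * k - 1) := by
      rw [hR1, ← hnk1, ← pow_add]; congr 1; omega
    rw [hnk1]
    exact arith B1.card B2.card E'.card X.card S1 S2 (2 ^ k - 1) (2 ^ (n - k) - 1)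
      (2 ^ (n * k - n)) (2 ^ (k - 1)) (2 ^ (n * k - k)) (2 ^ (n * k - 1))
      hB1card hE' (by omega) hB2card hX (by omega)
      (Nat.one_le_two_pow) (Nat.one_le_two_pow) (by omega) hprod1 hprod2
  -- pick a good generator matrix
  have hexists : ∃ G : Fin k → Fin n → ZMod 2, G ∉ B1 ∪ B2 := by
    by_contra hall
    push_neg at hall
    have hsub : (univ : Finset (Fin k → Fin n → ZMod 2)) ⊆ B1 ∪ B2 := fun G _ => hall G
    have := Finset.card_le_card hsub
    rw [card_univ, hcardMT] at this
    have := Finset.card_union_le B1 B2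
    omega
  obtain ⟨G, hG⟩ := hexists
  have hG1 : ∀ m : Fin k → ZMod 2, m ≠ 0 → phiL n k m G ∉ E' := by
    intro m hm hmem
    exact hG (Finset.mem_union_left _ (Finset.mem_biUnion.mpr
      ⟨m, by simp [hm], mem_filter.mpr ⟨mem_univ _, hmem⟩⟩))
  have hG2 : ∀ x ∈ X, psiL n k x G ≠ 0 := by
    intro x hx h0
    exact hG (Finset.mem_union_right _ (Finset.mem_biUnion.mpr
      ⟨x, hx, mem_filter.mpr ⟨mem_univ _, h0⟩⟩))
  -- weight bounds for all nonzero codewords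
  have hwt : ∀ m : Fin k → ZMod 2, m ≠ 0 →
      d ≤ hammingNorm (PhiL n k G m) ∧ hammingNorm (PhiL n k G m) ≤ n - d + 1 := by
    intro m hm
    have := hG1 m hm
    rw [hE'def] at this
    simp only [mem_filter, mem_univ, true_and, not_or, not_lt] at this
    have hphieq : phiL n k m G = PhiL n k G m := rfl
    rw [hphieq] at this
    omega
  -- build the code
  have hinj : Function.Injective (PhiL n k G) := by
    refine LinearMap.ker_eq_bot.mp (LinearMap.ker_eq_bot'.mpr fun m hm0 => ?_)
    by_contra hm
    have := (hwt m hm).1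
    rw [hm0] at this
    simp at this
    omega
  refine ⟨LinearMap.range (PhiL n k G), ?_, ?_, ?_, ?_⟩
  · rw [LinearMap.finrank_range_of_inj hinj]
    simp [Module.finrank_pi]
  · intro c hc hc0
    obtain ⟨m, hm⟩ := LinearMap.mem_range.mp hc
    have hm0 : m ≠ 0 := by
      rintro rfl
      rw [map_zero] at hm
      exact hc0 hm.symm
    rw [← hm]
    exact (hwt m hm0).1
  · intro c hc
    obtain ⟨m, hm⟩ := LinearMap.mem_range.mp hc
    by_cases hm0 : m = 0
    · subst hm0
      rw [map_zero] at hm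
      rw [← hm]
      simp
    · rw [← hm]
      exact (hwt m hm0).2
  · intro x hx hx0
    by_contra hlt
    push_neg at hlt
    have hxX : x ∈ X := by
      rw [hXdef]
      exact mem_filter.mpr ⟨mem_univ _, hx0, hlt⟩
    refine hG2 x hxX ?_
    funext i
    have hrow : G i ∈ LinearMap.range (PhiL n k G) := by
      refine LinearMap.mem_range.mpr ⟨(fun i' => if i' = i then (1 : ZMod 2) else 0), ?_⟩
      funext j
      show (∑ i', (if i' = i then (1 : ZMod 2) else 0) * G i' j) = G i j
      have heach : ∀ i', (if i' = i then (1 : ZMod 2) else 0) * G i' j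
          = if i' = i then G i' j else 0 := by
        intro i'
        rcases eq_or_ne i' i with h | h
        · subst h; simp
        · simp [h]
      rw [Finset.sum_congr rfl fun i' _ => heach i', Finset.sum_ite_eq' univ i]
      simp
    have := hx (G i) hrow
    show (∑ j, x j * G i j) = 0
    exact this
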